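/- Let λ, μ, ν ∈ ℝ and let m be a positive integer. For every positive integer n and reals d₁,…,dₙ with dᵢ ≥ 1 and Σᵢ dᵢ = m, there exist a positive integer n′ and a real d ≥ 1 with n′·d = m such that λ·c₁(n;d₁,…,dₙ)³ + μ·c₁(n;d₁,…,dₙ)·c₂(n;d₁,…,dₙ) + ν·c₃(n;d₁,…,dₙ) ≥ λ·c₁(n′;d,…,d)³ + μ·c₁(n′;d,…,d)·c₂(n′;d,…,d) + ν·c₃(n′;d,…,d), where in the second expression all n′ entries equal d. -/

import Mathlib

open Finset

/-- `s_j = ∑ i, dᵢ^j`. -/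
def sPow (n : ℕ) (d : Fin n → ℝ) (j : ℕ) : ℝ := ∑ i, (d i) ^ j

/-- `c₁ = 4 - s₁`. -/
def chern1 (n : ℕ) (d : Fin n → ℝ) : ℝ := 4 - sPow n d 1

/-- `c₂ = (s₁² + s₂)/2 - 3(s₁ - 2)`. -/
noncomputable def chern2 (n : ℕ) (d : Fin n → ℝ) : ℝ :=
  (sPow n d 1 ^ 2 + sPow n d 2) / 2 - 3 * (sPow n d 1 - 2)

/-- `c₃ = -(s₁³ + 3s₁s₂ + 2s₃)/6 + (s₁² + s₂) - 3s₁ + 4`. -/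
noncomputable def chern3 (n : ℕ) (d : Fin n → ℝ) : ℝ :=
  -(sPow n d 1 ^ 3 + 3 * sPow n d 1 * sPow n d 2 + 2 * sPow n d 3) / 6
    + (sPow n d 1 ^ 2 + sPow n d 2) - 3 * sPow n d 1 + 4

set_option maxHeartbeats 1000000

section AuxLemmas
private lemma a1lem (j e d : ℝ) (hj : 2 ≤ j) (he : 0 ≤ e) (hd : 0 ≤ d) :
    0 ≤ j*e*d*(e+d) + d*(j*(d-e)-2*d)*(j*(d-e)-d) := by
  nlinarith [mul_nonneg he hd, mul_nonneg (mul_nonneg he hd) (by linarith : (0:ℝ) ≤ j - 2),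
    sq_nonneg (j*(d-e) - 2*d), sq_nonneg (j*(d-e) - d), sq_nonneg (d-e),
    mul_nonneg hd (sq_nonneg (j*(d-e) - (3/2)*d)),
    mul_nonneg (mul_nonneg hd hd) (by linarith : (0:ℝ) ≤ j - 2),
    mul_nonneg (mul_nonneg (mul_nonneg he hd) hd) (by linarith : (0:ℝ) ≤ j - 2),
    mul_nonneg (mul_nonneg (mul_nonneg he he) hd) (by linarith : (0:ℝ) ≤ j - 2)]

private lemma a3lem (j e d : ℝ) (hj : 2 ≤ j) (he : 0 ≤ e) (hd : 0 ≤ d)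
    (hA1 : 0 ≤ 2*(j*(d+e)*(d-e)^2) - 3*(j*e^3+d^3))
    (hA2 : 0 ≤ (2*j-1)*(j*e^3+d^3) - 2*(j*(d+e)*(d-e)^2)) :
    (2*(j*(d+e)*(d-e)^2) - (j*e^3+d^3))^2 ≤ 4*(j*e^3+d^3)*(j*(j-1)*d*(d-e)^2) := by
  have hJ : (0:ℝ) ≤ j - 2 := by linarith
  have hs : (0:ℝ) ≤ j*e^3+d^3 := by positivity
  have hQ : (0:ℝ) ≤ j*d*(d-e)^2 := by positivity
  nlinarith [mul_nonneg (mul_nonneg hA2 hd) (sq_nonneg d),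
    mul_nonneg (mul_nonneg hA2 he) (sq_nonneg e),
    mul_nonneg (mul_nonneg hA2 he) (sq_nonneg (e-3*d)),
    mul_nonneg (mul_nonneg (mul_nonneg hA1 hJ) hd) (sq_nonneg e),
    mul_nonneg (mul_nonneg hd hQ) (sq_nonneg e),
    mul_nonneg (mul_nonneg hd hs) (sq_nonneg (3*e-d)),
    mul_nonneg (mul_nonneg hd hs) (sq_nonneg e),
    mul_nonneg (mul_nonneg (mul_nonneg hA1 hJ) he) (sq_nonneg e),
    mul_nonneg (mul_nonneg hA1 hd) (sq_nonneg e),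
    mul_nonneg (mul_nonneg (mul_nonneg (mul_nonneg hJ hJ) he) hQ) (sq_nonneg e),
    mul_nonneg (mul_nonneg he hs) (sq_nonneg e),
    mul_nonneg (mul_nonneg hA1 he) (sq_nonneg e),
    mul_nonneg (mul_nonneg hA2 hd) (sq_nonneg (3*e-d))]

/-- branch t < j, as pure real quadratic-in-ρ fact -/
private lemma branchA (J ρ e d : ℝ) (hJ2 : 2 ≤ J) (he : 0 ≤ e) (hd : 0 ≤ d)
    (hρ1 : 1 ≤ ρ) (hρJ : ρ ≤ J - 1) :
    0 ≤ (J*e^3+d^3)*ρ^2 - (2*(J*(d+e)*(d-e)^2) - (J*e^3+d^3))*ρ + J*(J-1)*d*(d-e)^2 := by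
  have hs3 : (0:ℝ) ≤ J*e^3+d^3 := by positivity
  have hFJ : (0:ℝ) ≤ J*(J-1)*d*(d-e)^2 := by
    have : (0:ℝ) ≤ J - 1 := by linarith
    positivity
  rcases le_or_gt (2*(J*(d+e)*(d-e)^2) - (J*e^3+d^3)) (2*(J*e^3+d^3)) with hW | hW
  · have h1 : 0 ≤ (J*e^3+d^3) - (2*(J*(d+e)*(d-e)^2) - (J*e^3+d^3)) + J*(J-1)*d*(d-e)^2 := by
      nlinarith [a1lem J e d hJ2 he hd]
    have h2 : 0 ≤ (J*e^3+d^3)*(ρ+1) - (2*(J*(d+e)*(d-e)^2) - (J*e^3+d^3)) := by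
      nlinarith [mul_nonneg hs3 (by linarith : (0:ℝ) ≤ ρ - 1)]
    nlinarith [mul_nonneg (by linarith : (0:ℝ) ≤ ρ - 1) h2]
  · rcases le_or_gt (2*(J*(d+e)*(d-e)^2) - (J*e^3+d^3)) (2*(J-1)*(J*e^3+d^3)) with hW2 | hW2
    · rcases eq_or_lt_of_le hs3 with hs0 | hs0
      · have hd0 : d = 0 := by nlinarith [pow_nonneg he 3, pow_nonneg hd 3]
        have he0 : e = 0 := by nlinarith [pow_nonneg he 3, pow_nonneg hd 3]
        rw [hd0, he0]; norm_num
      · have hdisc := a3lem J e d hJ2 he hd (by linarith) (by linarith)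
        have h4 : 0 ≤ (4*(J*e^3+d^3)) * ((J*e^3+d^3)*ρ^2 - (2*(J*(d+e)*(d-e)^2) - (J*e^3+d^3))*ρ + J*(J-1)*d*(d-e)^2) := by
          nlinarith [sq_nonneg (2*(J*e^3+d^3)*ρ - (2*(J*(d+e)*(d-e)^2) - (J*e^3+d^3))), hdisc]
        exact (mul_nonneg_iff_of_pos_left (by linarith : (0:ℝ) < 4*(J*e^3+d^3))).mp h4
    · have h1 : 0 ≤ (J*e^3+d^3)*(J-1)^2 - (2*(J*(d+e)*(d-e)^2) - (J*e^3+d^3))*(J-1) + J*(J-1)*d*(d-e)^2 := by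
        have hident : (J*e^3+d^3)*(J-1)^2 - (2*(J*(d+e)*(d-e)^2) - (J*e^3+d^3))*(J-1) + J*(J-1)*d*(d-e)^2
            = J*(J-1)*(J-2)*e^3 + 3*J*(J-1)*e^2*d := by ring
        rw [hident]
        have h2 : (0:ℝ) ≤ J - 2 := by linarith
        have h3 : (0:ℝ) ≤ J - 1 := by linarith
        positivity
      have hB : (0:ℝ) ≤ (2*(J*(d+e)*(d-e)^2) - (J*e^3+d^3)) - (J*e^3+d^3)*(ρ+(J-1)) := by
        nlinarith [mul_nonneg hs3 (by linarith : (0:ℝ) ≤ (J-1) - ρ)]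
      have hprod : 0 ≤ ((J-1) - ρ) * ((2*(J*(d+e)*(d-e)^2) - (J*e^3+d^3)) - (J*e^3+d^3)*(ρ+(J-1))) :=
        mul_nonneg (by linarith) hB
      nlinarith [h1, hprod]

/-- Chord inequality for special configurations. -/
private lemma chordS (j t : ℕ) (hj : 1 ≤ j) (ht : 1 ≤ t) (e d : ℝ) (he : 0 ≤ e) (hd : 0 ≤ d) :
    0 ≤ (t:ℝ)*((t:ℝ)+1)*((j:ℝ)*e^3+d^3)
      - (2*(t:ℝ)+1)*((j:ℝ)*e+d)*((j:ℝ)*e^2+d^2) + ((j:ℝ)*e+d)^3 := by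
  have hJ1 : (1:ℝ) ≤ (j:ℝ) := by exact_mod_cast hj
  have hT1 : (1:ℝ) ≤ (t:ℝ) := by exact_mod_cast ht
  have hs3 : (0:ℝ) ≤ (j:ℝ)*e^3+d^3 := by positivity
  rcases lt_trichotomy t j with h | h | h
  · have hj2 : (2:ℝ) ≤ (j:ℝ) := by exact_mod_cast (by omega : 2 ≤ j)
    have hTJ : (t:ℝ) + 1 ≤ (j:ℝ) := by exact_mod_cast Nat.succ_le_of_lt h
    have key := branchA (j:ℝ) ((j:ℝ)-(t:ℝ)) e d hj2 he hd (by linarith) (by linarith)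
    nlinarith [key]
  · have hTeqJ : (t:ℝ) = (j:ℝ) := by exact_mod_cast congrArg (Nat.cast : ℕ → ℝ) h
    rw [hTeqJ]
    have hpos : (0:ℝ) ≤ (j:ℝ)*((j:ℝ)-1)*d*(d-e)^2 := by
      have : (0:ℝ) ≤ (j:ℝ) - 1 := by linarith
      positivity
    nlinarith [hpos]
  · have hTJ : (j:ℝ) + 1 ≤ (t:ℝ) := by exact_mod_cast Nat.succ_le_of_lt h
    have hσ : (0:ℝ) ≤ (t:ℝ) - (j:ℝ) - 1 := by linarith
    have hc2 : (0:ℝ) ≤ ((j:ℝ)*e^3+d^3) + 2*(j:ℝ)*(d+e)*(d-e)^2 := by positivity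
    have hc3 : (0:ℝ) ≤ (j:ℝ)*(((j:ℝ)+1)*d+2*e)*(d-e)^2 := by positivity
    nlinarith [mul_nonneg (mul_nonneg hσ hσ) hs3, mul_nonneg hσ hc2, hc3]

private lemma caseSplit (B C M S2 S3 : ℝ) (K : ℕ)
    (hM : 0 < M) (hs2pos : 0 < S2) (hs2m : S2 ≤ M^2)
    (hKpos : 0 < K) (hKle : (K:ℝ) ≤ M) (hs2K : M^2 ≤ (K:ℝ)*S2)
    (hCauchy : S2^2 ≤ M*S3)
    (hUpper : (K:ℝ)*S3 + M^3 ≤ ((K:ℝ)+1)*M*S2)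
    (hChord : ∀ t:ℕ, 0 < t → 0 ≤ (t:ℝ)*((t:ℝ)+1)*S3 - (2*(t:ℝ)+1)*M*S2 + M^3) :
    ∃ k : ℕ, 0 < k ∧ (k:ℝ) ≤ M ∧ B*M^2*(k:ℝ) + C*M^3 ≤ (B*S2 + C*S3)*(k:ℝ)^2 := by
  have hKR : (0:ℝ) < (K:ℝ) := by exact_mod_cast hKpos
  rcases le_or_gt C 0 with hC | hC
  · rcases le_or_gt (B*(K:ℝ) + C*M*((K:ℝ)+1)) 0 with hBC | hBC
    · -- k = 1
      refine ⟨1, one_pos, by exact_mod_cast (by calc (1:ℝ) ≤ (K:ℝ) := by exact_mod_cast hKpos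
            _ ≤ M := hKle), ?_⟩
      push_cast
      have h1 : (K:ℝ)*(M^3 - S3) ≥ ((K:ℝ)+1)*M*(M^2 - S2) := by nlinarith
      have h2 : C*((K:ℝ)*(M^3 - S3)) ≤ C*(((K:ℝ)+1)*M*(M^2 - S2)) :=
        mul_le_mul_of_nonpos_left h1 hC
      have h3 : (B*(K:ℝ) + C*M*((K:ℝ)+1))*(M^2 - S2) ≤ 0 :=
        mul_nonpos_of_nonpos_of_nonneg hBC (by linarith)
      have h4 : (K:ℝ)*(B*(M^2 - S2) + C*(M^3 - S3)) ≤ 0 := by nlinarith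
      have h5 : B*(M^2 - S2) + C*(M^3 - S3) ≤ 0 := by
        by_contra hcon
        push_neg at hcon
        nlinarith
      nlinarith
    · -- k = K
      refine ⟨K, hKpos, hKle, ?_⟩
      have h1 : (K:ℝ)^2*S3 - M^3 ≤ ((K:ℝ)+1)*M*((K:ℝ)*S2 - M^2) := by nlinarith
      have h2 : C*((K:ℝ)^2*S3 - M^3) ≥ C*(((K:ℝ)+1)*M*((K:ℝ)*S2 - M^2)) :=
        mul_le_mul_of_nonpos_left h1 hC
      have h3 : 0 ≤ (B*(K:ℝ) + C*M*((K:ℝ)+1))*((K:ℝ)*S2 - M^2) :=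
        mul_nonneg hBC.le (by linarith)
      nlinarith
  · -- C > 0
    have hms2 : (1:ℝ) ≤ M^2/S2 := by rw [le_div_iff₀ hs2pos]; linarith
    set t : ℕ := ⌊M^2/S2⌋₊ with htdef
    have ht1 : 1 ≤ t := Nat.le_floor (by exact_mod_cast hms2)
    have ht1R : (1:ℝ) ≤ (t:ℝ) := by exact_mod_cast ht1
    have htpos : 0 < t := ht1
    have ht2 : (t:ℝ)*S2 ≤ M^2 := by
      have := Nat.floor_le (by positivity : (0:ℝ) ≤ M^2/S2)
      rw [← htdef] at this
      calc (t:ℝ)*S2 ≤ (M^2/S2)*S2 := by nlinarith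
        _ = M^2 := by field_simp
    have ht3 : M^2 < ((t:ℝ)+1)*S2 := by
      have := Nat.lt_floor_add_one (M^2/S2)
      rw [← htdef] at this
      calc M^2 = (M^2/S2)*S2 := by field_simp
        _ < ((t:ℝ)+1)*S2 := by nlinarith
    have htK : t ≤ K := by
      have hle : M^2/S2 ≤ (K:ℝ) := by rw [div_le_iff₀ hs2pos]; linarith
      calc t = ⌊M^2/S2⌋₊ := htdef
        _ ≤ ⌊((K:ℝ))⌋₊ := Nat.floor_le_floor hle
        _ = K := Nat.floor_natCast K
    have hchord := hChord t htpos
    rcases le_or_gt (B*((t:ℝ)*((t:ℝ)+1)) + C*(M*(2*(t:ℝ)+1))) 0 with hD | hD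
    · -- k = t
      refine ⟨t, htpos, by calc (t:ℝ) ≤ (K:ℝ) := by exact_mod_cast htK
          _ ≤ M := hKle, ?_⟩
      have h1 : ((t:ℝ)+1)*((t:ℝ)^2*S3 - M^3) ≥ (2*(t:ℝ)+1)*M*((t:ℝ)*S2 - M^2) := by nlinarith
      have h2 : 0 ≤ (B*((t:ℝ)*((t:ℝ)+1)) + C*(M*(2*(t:ℝ)+1)))*((t:ℝ)*S2 - M^2) := by
        have := mul_nonneg (neg_nonneg.2 hD) (neg_nonneg.2 (by linarith : (t:ℝ)*S2 - M^2 ≤ 0))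
        nlinarith [this]
      have h4 : 0 ≤ ((t:ℝ)+1)*(B*(t:ℝ)*((t:ℝ)*S2 - M^2) + C*((t:ℝ)^2*S3 - M^3)) := by nlinarith
      have h5 : 0 ≤ B*(t:ℝ)*((t:ℝ)*S2 - M^2) + C*((t:ℝ)^2*S3 - M^3) := by
        by_contra hcon
        push_neg at hcon
        nlinarith
      nlinarith
    · rcases lt_or_ge t K with htK2 | htK2
      · -- k = t+1
        have ht4 : ((t:ℝ)+1) ≤ (K:ℝ) := by exact_mod_cast Nat.succ_le_of_lt htK2
        refine ⟨t+1, Nat.succ_pos t, by push_cast; linarith, ?_⟩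
        push_cast
        have h1 : (t:ℝ)*(((t:ℝ)+1)^2*S3 - M^3) ≥ (2*(t:ℝ)+1)*M*(((t:ℝ)+1)*S2 - M^2) := by nlinarith
        have h2 : 0 ≤ (B*((t:ℝ)*((t:ℝ)+1)) + C*(M*(2*(t:ℝ)+1)))*(((t:ℝ)+1)*S2 - M^2) :=
          mul_nonneg hD.le (by linarith)
        have h4 : 0 ≤ (t:ℝ)*(B*((t:ℝ)+1)*(((t:ℝ)+1)*S2 - M^2) + C*(((t:ℝ)+1)^2*S3 - M^3)) := by nlinarith
        have h5 : 0 ≤ B*((t:ℝ)+1)*(((t:ℝ)+1)*S2 - M^2) + C*(((t:ℝ)+1)^2*S3 - M^3) := by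
          by_contra hcon
          push_neg at hcon
          nlinarith
        nlinarith
      · -- t = K, S2*t = M^2 exactly
        have htK3 : t = K := le_antisymm htK htK2
        subst htK3
        have heq : (t:ℝ)*S2 = M^2 := le_antisymm ht2 hs2K
        refine ⟨t, htpos, by calc (t:ℝ) ≤ M := hKle, ?_⟩
        have h6 : (t:ℝ)^2*S3 ≥ M^3 := by nlinarith
        have h7 : 0 ≤ C*((t:ℝ)^2*S3 - M^3) := mul_nonneg hC.le (by linarith)
        have h8 : B*S2*((t:ℝ))^2 = B*M^2*(t:ℝ) := by rw [← heq]; ring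
        nlinarith [h7, h8]

private lemma s4h (c j e d : ℝ) (hc : 1 ≤ c) (hj : 1 ≤ j) (he : 0 ≤ e) (hd : 0 ≤ d) :
    0 ≤ c*(j-1)*e^2 + (c-2*j+1)*e*d + (c+j-2)*d^2 := by
  rcases le_or_gt j 1 with h1 | h1
  · have hj1 : j = 1 := le_antisymm h1 hj
    subst hj1
    nlinarith [mul_nonneg (mul_nonneg (sub_nonneg.2 hc) he) hd,
      mul_nonneg (sub_nonneg.2 hc) (sq_nonneg d)]
  · have hcj : 0 < c*(j-1) := by nlinarith
    rw [← mul_nonneg_iff_of_pos_left hcj]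
    nlinarith [sq_nonneg (c*(j-1)*e - (j-1)*d),
      mul_nonneg (mul_nonneg (mul_nonneg (sub_nonneg.2 h1.le) (sub_nonneg.2 hc)) (by nlinarith : (0:ℝ) ≤ c+j-1)) (sq_nonneg d),
      mul_nonneg (mul_nonneg (mul_nonneg (by linarith : (0:ℝ) ≤ c*(j-1)) (sub_nonneg.2 hc)) he) hd]

private lemma specialLem (B C : ℝ) (j : ℕ) (hj : 0 < j) (e d : ℝ) (he : 1 ≤ e) (hd : 1 ≤ d) :
    ∃ k : ℕ, 0 < k ∧ (k:ℝ) ≤ (j:ℝ)*e + d ∧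
      B*((j:ℝ)*e+d)^2*(k:ℝ) + C*((j:ℝ)*e+d)^3
        ≤ (B*((j:ℝ)*e^2+d^2) + C*((j:ℝ)*e^3+d^3))*(k:ℝ)^2 := by
  have hjR : (1:ℝ) ≤ (j:ℝ) := by exact_mod_cast hj
  have he0 : (0:ℝ) ≤ e := by linarith
  have hd0 : (0:ℝ) ≤ d := by linarith
  have hM : (0:ℝ) < (j:ℝ)*e + d := by nlinarith
  have hjM : (j:ℝ) + 1 ≤ (j:ℝ)*e + d := by nlinarith
  set K : ℕ := ⌊(j:ℝ)*e + d⌋₊ with hKdef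
  have hKj : j + 1 ≤ K := Nat.le_floor (by push_cast; linarith)
  have hKjR : (j:ℝ) + 1 ≤ (K:ℝ) := by exact_mod_cast hKj
  have hKpos : 0 < K := by omega
  have hKle : (K:ℝ) ≤ (j:ℝ)*e + d := Nat.floor_le hM.le
  apply caseSplit B C ((j:ℝ)*e+d) ((j:ℝ)*e^2+d^2) ((j:ℝ)*e^3+d^3) K hM
    (by nlinarith) (by nlinarith [mul_nonneg (mul_nonneg (by linarith : (0:ℝ) ≤ (j:ℝ)) he0) (by nlinarith : (0:ℝ) ≤ ((j:ℝ)-1)*e + 2*d)])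
    hKpos hKle ?_ (by nlinarith [mul_nonneg (mul_nonneg (mul_nonneg (by linarith : (0:ℝ) ≤ (j:ℝ)) he0) hd0) (sq_nonneg (e-d))]) ?_ ?_
  · -- M^2 ≤ K * S2
    have h1 : ((j:ℝ)*e+d)^2 ≤ ((j:ℝ)+1)*((j:ℝ)*e^2+d^2) := by
      nlinarith [mul_nonneg (by linarith : (0:ℝ) ≤ (j:ℝ)) (sq_nonneg (e-d))]
    have h2 : (0:ℝ) ≤ (j:ℝ)*e^2+d^2 := by positivity
    nlinarith
  · -- Upper chord
    have hH := s4h ((K:ℝ)-(j:ℝ)) (j:ℝ) e d (by linarith) hjR he0 hd0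
    have hident : ((K:ℝ)+1)*((j:ℝ)*e+d)*((j:ℝ)*e^2+d^2) - (K:ℝ)*((j:ℝ)*e^3+d^3) - ((j:ℝ)*e+d)^3
        = ((j:ℝ)*e)*(((K:ℝ)-(j:ℝ))*((j:ℝ)-1)*e^2 + (((K:ℝ)-(j:ℝ))-2*(j:ℝ)+1)*e*d + (((K:ℝ)-(j:ℝ))+(j:ℝ)-2)*d^2) := by
      ring
    nlinarith [mul_nonneg (mul_nonneg (by linarith : (0:ℝ) ≤ (j:ℝ)) he0) hH]
  · -- chords
    intro t ht
    exact chordS j t hj ht e d he0 hd0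

private lemma keyInd : ∀ (n : ℕ), 0 < n → ∀ (d : Fin n → ℝ), (∀ i, 1 ≤ d i) → ∀ B C : ℝ,
    ∃ k : ℕ, 0 < k ∧ (k:ℝ) ≤ ∑ i, d i ∧
      B*(∑ i, d i)^2*(k:ℝ) + C*(∑ i, d i)^3
        ≤ (B*(∑ i, (d i)^2) + C*(∑ i, (d i)^3))*(k:ℝ)^2 := by
  intro n
  induction n with
  | zero => intro h; exact absurd h (lt_irrefl 0)
  | succ n ih =>
    intro _ d hd B C
    rcases Nat.eq_zero_or_pos n with hn0 | hn0
    · subst hn0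
      refine ⟨1, one_pos, ?_, ?_⟩
      · simpa using le_trans (hd 0) (le_of_eq (Fin.sum_univ_one d).symm)
      · simp [Fin.sum_univ_one]
    · set d' : Fin n → ℝ := fun i => d i.castSucc with hd'def
      have hd' : ∀ i, 1 ≤ d' i := fun i => hd _
      obtain ⟨j, hjpos, hjle, hIH⟩ := ih hn0 d' hd' B C
      set m' : ℝ := ∑ i, d' i with hm'def
      have hjR : (1:ℝ) ≤ (j:ℝ) := by exact_mod_cast hjpos
      have hjR0 : (0:ℝ) < (j:ℝ) := by linarith
      set e : ℝ := m'/(j:ℝ) with hedef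
      have hje : (j:ℝ)*e = m' := by rw [hedef]; field_simp
      have he : 1 ≤ e := by rw [hedef, le_div_iff₀ hjR0]; linarith
      have hD := hd (Fin.last n)
      obtain ⟨k, hkpos, hkle, hkineq⟩ := specialLem B C j hjpos e (d (Fin.last n)) he hD
      have hsum1 : ∑ i, d i = m' + d (Fin.last n) := by
        rw [hm'def, hd'def, Fin.sum_univ_castSucc]
      have hsum2 : ∑ i, (d i)^2 = (∑ i, (d' i)^2) + (d (Fin.last n))^2 := by
        rw [hd'def, Fin.sum_univ_castSucc]
      have hsum3 : ∑ i, (d i)^3 = (∑ i, (d' i)^3) + (d (Fin.last n))^3 := by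
        rw [hd'def, Fin.sum_univ_castSucc]
      refine ⟨k, hkpos, ?_, ?_⟩
      · rw [hsum1, ← hje]; exact hkle
      · have hj2 : (0:ℝ) < (j:ℝ)^2 := by positivity
        -- divide IH by j^2
        have hIH' : B*(j*e^2) + C*(j*e^3) ≤ B*(∑ i, (d' i)^2) + C*(∑ i, (d' i)^3) := by
          have hA : ((j:ℝ))^2*(B*(j*e^2)+C*(j*e^3)) = B*m'^2*(j:ℝ) + C*m'^3 := by
            rw [← hje]; ring
          have hBkey : ((j:ℝ))^2*(B*(∑ i, (d' i)^2) + C*(∑ i, (d' i)^3))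
              = (B*(∑ i, (d' i)^2) + C*(∑ i, (d' i)^3))*(j:ℝ)^2 := by ring
          exact (mul_le_mul_iff_right₀ hj2).mp (by rw [hA, hBkey]; exact hIH)
        have hk2 : (0:ℝ) ≤ (k:ℝ)^2 := by positivity
        calc B*(∑ i, d i)^2*(k:ℝ) + C*(∑ i, d i)^3
            = B*((j:ℝ)*e + d (Fin.last n))^2*(k:ℝ) + C*((j:ℝ)*e + d (Fin.last n))^3 := by
              rw [hsum1, ← hje]
          _ ≤ (B*((j:ℝ)*e^2+(d (Fin.last n))^2) + C*((j:ℝ)*e^3+(d (Fin.last n))^3))*(k:ℝ)^2 := hkineq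
          _ ≤ (B*(∑ i, (d i)^2) + C*(∑ i, (d i)^3))*(k:ℝ)^2 := by
              apply mul_le_mul_of_nonneg_right _ hk2
              rw [hsum2, hsum3]
              linarith
end AuxLemmas

theorem reduce_to_equal_degrees
    (lam mu nu : ℝ) (m : ℕ) (hm : 0 < m)
    (n : ℕ) (hn : 0 < n) (d : Fin n → ℝ) (hd : ∀ i, 1 ≤ d i)
    (hsum : ∑ i, d i = (m : ℝ)) :
    ∃ (n' : ℕ) (e : ℝ), 0 < n' ∧ 1 ≤ e ∧ (n' : ℝ) * e = (m : ℝ) ∧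
      lam * chern1 n' (fun _ => e) ^ 3
        + mu * chern1 n' (fun _ => e) * chern2 n' (fun _ => e)
        + nu * chern3 n' (fun _ => e) ≤
      lam * chern1 n d ^ 3 + mu * chern1 n d * chern2 n d + nu * chern3 n d := by
  obtain ⟨k, hkpos, hkle, hkey⟩ :=
    keyInd n hn d hd (mu*(4-(m:ℝ))/2 + nu*(1-(m:ℝ)/2)) (-nu/3)
  rw [hsum] at hkle hkey
  have hkR : (0:ℝ) < (k:ℝ) := by exact_mod_cast hkpos
  refine ⟨k, (m:ℝ)/(k:ℝ), hkpos, ?_, ?_, ?_⟩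
  · rw [le_div_iff₀ hkR]; linarith
  · field_simp
  · have hke : (k:ℝ)*((m:ℝ)/(k:ℝ)) = (m:ℝ) := by field_simp
    have h1 : sPow n d 1 = (m:ℝ) := by simpa [sPow] using hsum
    have h1' : sPow k (fun _ => (m:ℝ)/(k:ℝ)) 1 = (m:ℝ) := by
      simp [sPow, Finset.sum_const, Fintype.card_fin]
      field_simp
    have h2' : sPow k (fun _ => (m:ℝ)/(k:ℝ)) 2 = (k:ℝ)*((m:ℝ)/(k:ℝ))^2 := by
      simp [sPow, Finset.sum_const, Fintype.card_fin]
    have h3' : sPow k (fun _ => (m:ℝ)/(k:ℝ)) 3 = (k:ℝ)*((m:ℝ)/(k:ℝ))^3 := by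
      simp [sPow, Finset.sum_const, Fintype.card_fin]
    have hs2 : sPow n d 2 = ∑ i, (d i)^2 := rfl
    have hs3 : sPow n d 3 = ∑ i, (d i)^3 := rfl
    -- divided main inequality
    have hk2 : (0:ℝ) < (k:ℝ)^2 := by positivity
    have hmain : (mu*(4-(m:ℝ))/2 + nu*(1-(m:ℝ)/2))*((k:ℝ)*((m:ℝ)/(k:ℝ))^2)
        + (-nu/3)*((k:ℝ)*((m:ℝ)/(k:ℝ))^3)
        ≤ (mu*(4-(m:ℝ))/2 + nu*(1-(m:ℝ)/2))*(∑ i, (d i)^2) + (-nu/3)*(∑ i, (d i)^3) := by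
      apply (mul_le_mul_iff_right₀ hk2).mp
      have hA : (k:ℝ)^2*((mu*(4-(m:ℝ))/2 + nu*(1-(m:ℝ)/2))*((k:ℝ)*((m:ℝ)/(k:ℝ))^2)
          + (-nu/3)*((k:ℝ)*((m:ℝ)/(k:ℝ))^3))
          = (mu*(4-(m:ℝ))/2 + nu*(1-(m:ℝ)/2))*(m:ℝ)^2*(k:ℝ) + (-nu/3)*(m:ℝ)^3 := by
        field_simp
      rw [hA]
      calc (mu*(4-(m:ℝ))/2 + nu*(1-(m:ℝ)/2))*(m:ℝ)^2*(k:ℝ) + (-nu/3)*(m:ℝ)^3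
          ≤ ((mu*(4-(m:ℝ))/2 + nu*(1-(m:ℝ)/2))*(∑ i, (d i)^2) + (-nu/3)*(∑ i, (d i)^3))*(k:ℝ)^2 := hkey
        _ = (k:ℝ)^2*((mu*(4-(m:ℝ))/2 + nu*(1-(m:ℝ)/2))*(∑ i, (d i)^2) + (-nu/3)*(∑ i, (d i)^3)) := by ring
    simp only [chern1, chern2, chern3, h1, h1', h2', h3', hs2, hs3]
    linarith [hmain]
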